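/- Let 1 ≤ p ≤ q and n = p + q, and let 𝒬 be the quadratic form 𝒬(v) = vᵀQ_{p,q}v on ℝⁿ. Let V ⊂ ℝⁿ be a hyperplane such that ℝⁿ = V ⊕ L, where L is the 𝒬-orthogonal complement of V, and suppose 𝒬 is positive on L ∖ {0}. Let ℝⁿ = P₁ ⊕ ⋯ ⊕ P_p ⊕ P_rest be a 𝒬-orthogonal direct sum decomposition in which each P_i is 2-dimensional and 𝒬 restricted to P_i has signature (1,1). Then there exists a p-dimensional subspace W ⊆ ℝⁿ such that 𝒬 is negative definite on W, W ⊆ V, and dim(W ∩ P_i) = 1 for all i = 1, …, p, if and only if for every i = 1, …, p there exists v_i ∈ P_i ∩ V with 𝒬(v_i) < 0. -/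

import Mathlib

open Matrix

/-- The matrix `Q_{p,q} = diag(−Id_p, Id_q)` on `ℝ^{p+q}`. -/
noncomputable def Qpq (p q : ℕ) : Matrix (Fin (p + q)) (Fin (p + q)) ℝ :=
  Matrix.diagonal (fun i => if (i : ℕ) < p then -1 else 1)

/-- a maximal flat (given by the `𝒬`-orthogonal decomposition
`ℝⁿ = P₁ ⊕ ⋯ ⊕ P_p ⊕ P_rest`) meets the fixed point set determined by the hyperplane `V`
iff each `P_i ∩ V` contains a 𝒬-negative vector. -/
theorem flat_meets_fixed_set_iff (p q : ℕ) (hp : 1 ≤ p) (hpq : p ≤ q)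
    (V L : Submodule ℝ (Fin (p + q) → ℝ))
    (hVdim : Module.finrank ℝ V = p + q - 1)
    (hL : ∀ w, w ∈ L ↔ ∀ v ∈ V, v ⬝ᵥ (Qpq p q) *ᵥ w = 0)
    (hcompl : IsCompl V L)
    (hLpos : ∀ w ∈ L, w ≠ 0 → 0 < w ⬝ᵥ (Qpq p q) *ᵥ w)
    (P : Fin p → Submodule ℝ (Fin (p + q) → ℝ)) (Prest : Submodule ℝ (Fin (p + q) → ℝ))
    (hindep : iSupIndep (fun o : Option (Fin p) => o.elim Prest P))
    (hspan : (⨆ o : Option (Fin p), o.elim Prest P) = ⊤)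
    (horth : ∀ o o' : Option (Fin p), o ≠ o' →
      ∀ x ∈ o.elim Prest P, ∀ y ∈ o'.elim Prest P, x ⬝ᵥ (Qpq p q) *ᵥ y = 0)
    (hPdim : ∀ i, Module.finrank ℝ (P i) = 2)
    (hsig : ∀ i, (∃ x ∈ P i, 0 < x ⬝ᵥ (Qpq p q) *ᵥ x) ∧ (∃ x ∈ P i, x ⬝ᵥ (Qpq p q) *ᵥ x < 0) ∧
      (∀ x ∈ P i, (∀ y ∈ P i, x ⬝ᵥ (Qpq p q) *ᵥ y = 0) → x = 0)) :
    (∃ W : Submodule ℝ (Fin (p + q) → ℝ), Module.finrank ℝ W = p ∧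
        (∀ w ∈ W, w ≠ 0 → w ⬝ᵥ (Qpq p q) *ᵥ w < 0) ∧ W ≤ V ∧
        (∀ i, Module.finrank ℝ ↥(W ⊓ P i) = 1)) ↔
    (∀ i, ∃ v ∈ P i ⊓ V, v ⬝ᵥ (Qpq p q) *ᵥ v < 0) := by
  classical
  constructor
  · rintro ⟨W, hWdim, hWneg, hWV, hWP⟩ i
    obtain ⟨x, hx, hxne⟩ : ∃ x ∈ W ⊓ P i, x ≠ 0 := by
      by_contra h
      push_neg at h
      have hbot : W ⊓ P i = ⊥ := by
        rw [Submodule.eq_bot_iff]; exact h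
      have h1 := hWP i
      rw [hbot] at h1
      simp at h1
    exact ⟨x, ⟨hx.2, hWV hx.1⟩, hWneg x hx.1 hxne⟩
  · intro hv
    obtain ⟨v, hvmem, hvneg⟩ :
        ∃ v : Fin p → (Fin (p + q) → ℝ), (∀ i, v i ∈ P i ⊓ V) ∧
          (∀ i, v i ⬝ᵥ (Qpq p q) *ᵥ v i < 0) := by
      choose v h1 h2 using hv
      exact ⟨v, h1, h2⟩
    have hvP : ∀ i, v i ∈ P i := fun i => (hvmem i).1
    have hvV : ∀ i, v i ∈ V := fun i => (hvmem i).2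
    have hvne : ∀ i, v i ≠ 0 := by
      intro i h
      have h2 := hvneg i
      rw [h] at h2
      simp at h2
    have hPind : iSupIndep P := by
      have h3 := hindep.comp (Option.some_injective (Fin p))
      exact h3
    have hli : LinearIndependent ℝ v := hPind.linearIndependent P hvP hvne
    refine ⟨Submodule.span ℝ (Set.range v), ?_, ?_, ?_, ?_⟩
    · rw [finrank_span_eq_card hli, Fintype.card_fin]
    · intro w hw hwne
      obtain ⟨c, hc⟩ := (Submodule.mem_span_range_iff_exists_fun ℝ).mp hw
      have horthv : ∀ i j : Fin p, i ≠ j → v i ⬝ᵥ (Qpq p q) *ᵥ v j = 0 := fun i j hij =>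
        horth (some i) (some j) (by simpa using hij) (v i) (hvP i) (v j) (hvP j)
      set B : (Fin (p + q) → ℝ) →ₗ[ℝ] (Fin (p + q) → ℝ) →ₗ[ℝ] ℝ := Matrix.toLinearMap₂' ℝ (Qpq p q) with hB
      have hBapp : ∀ x y, B x y = x ⬝ᵥ (Qpq p q) *ᵥ y := fun x y =>
        Matrix.toLinearMap₂'_apply' _ _ _
      have hexp : w ⬝ᵥ (Qpq p q) *ᵥ w =
          ∑ i, (c i * c i) * (v i ⬝ᵥ (Qpq p q) *ᵥ v i) := by
        rw [← hBapp, ← hc]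
        simp only [map_sum, LinearMap.sum_apply, _root_.map_smul, LinearMap.smul_apply, smul_eq_mul]
        apply Finset.sum_congr rfl
        intro j _
        rw [Finset.sum_eq_single j]
        · rw [hBapp]; ring
        · intro i _ hij
          rw [hBapp, horthv i j hij]; ring
        · intro h; exact absurd (Finset.mem_univ j) h
      rw [hexp]
      have hcne : ∃ i, c i ≠ 0 := by
        by_contra h
        push_neg at h
        apply hwne
        rw [← hc]
        simp [h]
      obtain ⟨i0, hi0⟩ := hcne
      have hlt : ∑ i, (c i * c i) * (v i ⬝ᵥ (Qpq p q) *ᵥ v i) < ∑ _i : Fin p, (0 : ℝ) := by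
        apply Finset.sum_lt_sum
        · intro i _
          exact mul_nonpos_of_nonneg_of_nonpos (mul_self_nonneg _) (le_of_lt (hvneg i))
        · exact ⟨i0, Finset.mem_univ _,
            mul_neg_of_pos_of_neg (mul_self_pos.mpr hi0) (hvneg i0)⟩
      simpa using hlt
    · rw [Submodule.span_le]
      rintro x ⟨i, rfl⟩
      exact hvV i
    · intro i
      have heq : Submodule.span ℝ (Set.range v) ⊓ P i = Submodule.span ℝ {v i} := by
        apply le_antisymm
        · rintro x ⟨hx1, hx2⟩
          obtain ⟨c, hc⟩ := (Submodule.mem_span_range_iff_exists_fun ℝ).mp hx1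
          have hrest : x - c i • v i ∈ P i :=
            Submodule.sub_mem _ hx2 (Submodule.smul_mem _ _ (hvP i))
          have hrest2 : x - c i • v i ∈
              ⨆ (o : Option (Fin p)) (_ : o ≠ some i), (o.elim Prest P) := by
            rw [← hc]
            have hsum : (∑ j, c j • v j) - c i • v i =
                ∑ j ∈ Finset.univ.erase i, c j • v j :=
              (Finset.sum_erase_eq_sub (Finset.mem_univ i)).symm
            rw [hsum]
            apply Submodule.sum_mem
            intro j hj
            have hne : (some j : Option (Fin p)) ≠ some i := by
              simp only [Finset.mem_erase] at hj
              simpa using hj.1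
            exact Submodule.smul_mem _ _
              (Submodule.mem_iSup_of_mem (some j) (Submodule.mem_iSup_of_mem hne (hvP j)))
          have hzero : x - c i • v i = 0 := by
            have hdisj := hindep (some i)
            rw [Submodule.disjoint_def] at hdisj
            exact hdisj _ hrest hrest2
          have hx : x = c i • v i := by
            rw [sub_eq_zero] at hzero; exact hzero
          rw [hx]
          exact Submodule.smul_mem _ _ (Submodule.mem_span_singleton_self _)
        · rw [Submodule.span_le, Set.singleton_subset_iff]
          exact ⟨Submodule.subset_span ⟨i, rfl⟩, hvP i⟩
      rw [heq]
      exact finrank_span_singleton (hvne i)
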